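/- Let H be a finite connected bipartite graph with parts W and B that contains no induced subgraph isomorphic to S_{1,1,3} and contains an induced path P_8 on 8 vertices. Then H is either a chordless path or a chordless cycle (i.e. H itself is an induced path or an induced cycle). -/

import Mathlib

open SimpleGraph

/-- `S` is an independent set in `G`: pairwise non-adjacent vertices. -/
def IndepOn {V : Type*} (G : SimpleGraph V) (S : Set V) : Prop :=
  S.Pairwise fun u v => ¬ G.Adj u v

/-- `NSet G U` is the set of vertices adjacent to at least one vertex of `U`. -/
def NSet {V : Type*} (G : SimpleGraph V) (U : Set V) : Set V :=
  {v | ∃ u ∈ U, G.Adj u v}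

/-- `(W, B)` is a bipartition of `G` into two independent parts covering all vertices. -/
def IsBipartition {V : Type*} (G : SimpleGraph V) (W B : Set V) : Prop :=
  W ∪ B = Set.univ ∧ Disjoint W B ∧ IndepOn G W ∧ IndepOn G B

/-- A bipartite graph `G` with parts `W` and `B` is irreducible if
(a) `|W| = |B| - 1`, (b) every nonempty `A ⊆ W` satisfies `|A| < |N(A) ∩ B|`,
and (c) `G` is connected. -/
def IrreducibleBip {V : Type*} (G : SimpleGraph V) (W B : Set V) : Prop :=
  IsBipartition G W B ∧
  W.ncard + 1 = B.ncard ∧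
  (∀ A ⊆ W, A.Nonempty → A.ncard < (NSet G A ∩ B).ncard) ∧
  G.Connected

/-- The simple tree `T_k`: the star `K_{1,k}` with each edge subdivided once.
Vertex `0` is the centre, vertices `1,…,k` are the subdivision vertices `a_i`,
and vertices `k+1,…,2k` are the leaves `b_i = i + k`. -/
def simpleTree (k : ℕ) : SimpleGraph (Fin (2 * k + 1)) :=
  SimpleGraph.fromRel fun i j =>
    (i.val = 0 ∧ 1 ≤ j.val ∧ j.val ≤ k) ∨ (1 ≤ i.val ∧ i.val ≤ k ∧ j.val = i.val + k)

/-- The tree `S_{1,1,3}`: three leaves at distances 1, 1, 3 from the unique degree-3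
vertex `0`. Edges: 0-1, 0-2, 0-3, 3-4, 4-5. -/
def S113 : SimpleGraph (Fin 6) :=
  SimpleGraph.fromRel fun i j =>
    (i = 0 ∧ j = 1) ∨ (i = 0 ∧ j = 2) ∨ (i = 0 ∧ j = 3) ∨ (i = 3 ∧ j = 4) ∨ (i = 4 ∧ j = 5)

/-- The claw `K_{1,3}`-freeness. -/
def ClawFree {V : Type*} (G : SimpleGraph V) : Prop :=
  IsEmpty (completeBipartiteGraph (Fin 1) (Fin 3) ↪g G)

/-- Every finite connected bipartite `S_{1,1,3}`-free graph containing an induced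
`P_8` is a chordless path or a chordless cycle. -/
instance : DecidableRel S113.Adj :=
  fun _ _ => inferInstanceAs (Decidable (_ ∧ _))

/-- An induced (chordless) path on vertices `p 0, …, p n`. -/
def IsIndPath {V : Type} (G : SimpleGraph V) (p : ℕ → V) (n : ℕ) : Prop :=
  (∀ i ≤ n, ∀ j ≤ n, p i = p j → i = j) ∧
  (∀ i ≤ n, ∀ j ≤ n, (G.Adj (p i) (p j) ↔ (i + 1 = j ∨ j + 1 = i)))

namespace St9Aux

variable {V : Type} {G : SimpleGraph V} {W B : Set V}

private def six {V : Type} (a b c d e f : V) : Fin 6 → V :=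
  fun x => if x.val = 0 then a else if x.val = 1 then b else if x.val = 2 then c
    else if x.val = 3 then d else if x.val = 4 then e else f

set_option maxHeartbeats 1000000 in
lemma S113_of (hfree : IsEmpty (S113 ↪g G)) (a b c d e f : V)
    (hab : G.Adj a b) (hac : G.Adj a c) (had : G.Adj a d) (hde : G.Adj d e) (hef : G.Adj e f)
    (hbc : ¬G.Adj b c) (hbd : ¬G.Adj b d) (hbe : ¬G.Adj b e) (hbf : ¬G.Adj b f)
    (hcd : ¬G.Adj c d) (hce : ¬G.Adj c e) (hcf : ¬G.Adj c f)
    (hae : ¬G.Adj a e) (haf : ¬G.Adj a f) (hdf : ¬G.Adj d f)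
    (nbc : b ≠ c) (nbd : b ≠ d) (nbe : b ≠ e) (nbf : b ≠ f)
    (ncd : c ≠ d) (nce : c ≠ e) (ncf : c ≠ f)
    (nae : a ≠ e) (naf : a ≠ f) (ndf : d ≠ f) : False := by
  have nab := hab.ne
  have nac := hac.ne
  have nad := had.ne
  have nde := hde.ne
  have nef := hef.ne
  refine hfree.false ⟨⟨six a b c d e f, ?_⟩, ?_⟩
  · intro x y h
    fin_cases x <;> fin_cases y <;> simp_all [six]
  · intro x y
    fin_cases x <;> fin_cases y <;> simp only [six] <;> norm_num <;>
      first
      | exact iff_of_true (by assumption) (by decide)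
      | exact iff_of_true (G.adj_symm (by assumption)) (by decide)
      | exact iff_of_false (by assumption) (by decide)
      | exact iff_of_false (fun h => hbc h.symm) (by decide)
      | exact iff_of_false (fun h => hbd h.symm) (by decide)
      | exact iff_of_false (fun h => hbe h.symm) (by decide)
      | exact iff_of_false (fun h => hbf h.symm) (by decide)
      | exact iff_of_false (fun h => hcd h.symm) (by decide)
      | exact iff_of_false (fun h => hce h.symm) (by decide)
      | exact iff_of_false (fun h => hcf h.symm) (by decide)
      | exact iff_of_false (fun h => hae h.symm) (by decide)
      | exact iff_of_false (fun h => haf h.symm) (by decide)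
      | exact iff_of_false (fun h => hdf h.symm) (by decide)
      | exact iff_of_false (G.loopless.irrefl _) (by decide)

lemma cover (hbip : IsBipartition G W B) : ∀ x : V, x ∈ W ∨ x ∈ B := by
  intro x
  have : x ∈ W ∪ B := by rw [hbip.1]; trivial
  exact this

lemma indepW (hbip : IsBipartition G W B) {x y : V} (hx : x ∈ W) (hy : y ∈ W) :
    ¬ G.Adj x y := by
  intro h
  exact hbip.2.2.1 hx hy h.ne h

lemma indepB (hbip : IsBipartition G W B) {x y : V} (hx : x ∈ B) (hy : y ∈ B) :
    ¬ G.Adj x y := by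
  intro h
  exact hbip.2.2.2 hx hy h.ne h

/-- the two neighbours of a common vertex lie on the same side -/
lemma nbrs_same_side (hbip : IsBipartition G W B) {v a b : V}
    (h1 : G.Adj v a) (h2 : G.Adj v b) : (a ∈ W ↔ b ∈ W) := by
  rcases cover hbip v with hv | hv
  · have ha : a ∉ W := fun h => indepW hbip hv h h1
    have hb : b ∉ W := fun h => indepW hbip hv h h2
    exact iff_of_false ha hb
  · have ha : a ∈ W := by
      rcases cover hbip a with h | h
      · exact h
      · exact absurd h1 (indepB hbip hv h)
    have hb : b ∈ W := by
      rcases cover hbip b with h | h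
      · exact h
      · exact absurd h2 (indepB hbip hv h)
    exact iff_of_true ha hb

lemma adj_alt (hbip : IsBipartition G W B) {x y : V} (h : G.Adj x y) :
    (y ∈ W ↔ ¬ x ∈ W) := by
  rcases cover hbip x with hx | hx
  · have hy : y ∉ W := fun hy => indepW hbip hx hy h
    exact iff_of_false hy (not_not_intro hx)
  · have hxW : x ∉ W := Set.disjoint_right.mp hbip.2.1 hx
    have hy : y ∈ W := by
      rcases cover hbip y with hy | hy
      · exact hy
      · exact absurd h (indepB hbip hx hy)
    exact iff_of_true hy hxW

lemma path_side (hbip : IsBipartition G W B) {p : ℕ → V} {n : ℕ}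
    (hp : IsIndPath G p n) : ∀ j ≤ n, (p j ∈ W ↔ (Even j ↔ p 0 ∈ W)) := by
  intro j
  induction j with
  | zero => intro _; simp
  | succ j ih =>
    intro hj
    have hadj : G.Adj (p j) (p (j+1)) :=
      (hp.2 j (by omega) (j+1) hj).mpr (Or.inl rfl)
    have halt := adj_alt hbip hadj
    have hIH := ih (by omega)
    rw [halt, hIH, Nat.even_add_one]
    tauto

/-- if `w` is adjacent to `p i` then it is not adjacent to `p j` for `j` of the other parity -/
lemma vside (hbip : IsBipartition G W B) {p : ℕ → V} {n : ℕ}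
    (hp : IsIndPath G p n) {w : V} {i j : ℕ} (hi : i ≤ n) (hj : j ≤ n)
    (hvi : G.Adj w (p i)) (hpar : (i + j) % 2 = 1) : ¬ G.Adj w (p j) := by
  intro hvj
  have h1 := nbrs_same_side hbip hvi hvj
  have h2 := path_side hbip hp i hi
  have h3 := path_side hbip hp j hj
  have h4 : (Even i ↔ Even j) := by tauto
  rw [Nat.even_iff, Nat.even_iff] at h4
  omega

lemma indPath_rev {p : ℕ → V} {n : ℕ} (hp : IsIndPath G p n) :
    IsIndPath G (fun t => p (n - t)) n := by
  constructor
  · intro i hi j hj h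
    have := hp.1 (n - i) (by omega) (n - j) (by omega) h
    omega
  · intro i hi j hj
    rw [hp.2 (n - i) (by omega) (n - j) (by omega)]
    omega

section Core

variable {V : Type} {G : SimpleGraph V} {W B : Set V}
variable (hbip : IsBipartition G W B) (hfree : IsEmpty (S113 ↪g G))
variable {p : ℕ → V} {n : ℕ} (hp : IsIndPath G p n)
variable {w : V} (hw : ∀ t ≤ n, w ≠ p t)

include hbip hfree hp hw

/-- Claim A: the adjacency of an outside vertex to the path cascades by two. -/
lemma stepUp {i : ℕ} (hi1 : 1 ≤ i) (hi2 : i + 3 ≤ n)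
    (hadj : G.Adj w (p i)) : G.Adj w (p (i + 2)) := by
  by_contra hno
  have inj := hp.1
  have adj := hp.2
  refine S113_of hfree (p i) (p (i-1)) w (p (i+1)) (p (i+2)) (p (i+3))
    ?_ ?_ ?_ ?_ ?_ ?_ ?_ ?_ ?_ ?_ ?_ ?_ ?_ ?_ ?_ ?_ ?_ ?_ ?_ ?_ ?_ ?_ ?_ ?_ ?_
  · exact (adj i (by omega) (i-1) (by omega)).mpr (by omega)
  · exact hadj.symm
  · exact (adj i (by omega) (i+1) (by omega)).mpr (by omega)
  · exact (adj (i+1) (by omega) (i+2) (by omega)).mpr (by omega)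
  · exact (adj (i+2) (by omega) (i+3) (by omega)).mpr (by omega)
  · exact fun h => vside hbip hp (by omega : i ≤ n) (by omega : i - 1 ≤ n) hadj (by omega) h.symm
  · rw [adj (i-1) (by omega) (i+1) (by omega)]; omega
  · rw [adj (i-1) (by omega) (i+2) (by omega)]; omega
  · rw [adj (i-1) (by omega) (i+3) (by omega)]; omega
  · exact vside hbip hp (by omega : i ≤ n) (by omega : i + 1 ≤ n) hadj (by omega)
  · exact hno
  · exact vside hbip hp (by omega : i ≤ n) (by omega : i + 3 ≤ n) hadj (by omega)
  · rw [adj i (by omega) (i+2) (by omega)]; omega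
  · rw [adj i (by omega) (i+3) (by omega)]; omega
  · rw [adj (i+1) (by omega) (i+3) (by omega)]; omega
  · exact fun h => hw (i-1) (by omega) h.symm
  · exact fun h => (by omega : ¬ (i-1 = i+1)) (inj (i-1) (by omega) (i+1) (by omega) h)
  · exact fun h => (by omega : ¬ (i-1 = i+2)) (inj (i-1) (by omega) (i+2) (by omega) h)
  · exact fun h => (by omega : ¬ (i-1 = i+3)) (inj (i-1) (by omega) (i+3) (by omega) h)
  · exact hw (i+1) (by omega)
  · exact hw (i+2) (by omega)
  · exact hw (i+3) (by omega)
  · exact fun h => (by omega : ¬ (i = i+2)) (inj i (by omega) (i+2) (by omega) h)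
  · exact fun h => (by omega : ¬ (i = i+3)) (inj i (by omega) (i+3) (by omega) h)
  · exact fun h => (by omega : ¬ (i+1 = i+3)) (inj (i+1) (by omega) (i+3) (by omega) h)

lemma cascUp {i : ℕ} (hi1 : 1 ≤ i) (hadj : G.Adj w (p i)) :
    ∀ t, i + 2 * t + 1 ≤ n → G.Adj w (p (i + 2 * t)) := by
  intro t
  induction t with
  | zero => intro _; simpa using hadj
  | succ t ih =>
    intro ht
    have h1 : G.Adj w (p (i + 2 * t)) := ih (by omega)
    have h2 := stepUp hbip hfree hp hw (i := i + 2 * t) (by omega) (by omega) h1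
    have e : i + 2 * (t + 1) = i + 2 * t + 2 := by ring
    rw [e]
    exact h2

/-- Final contradiction configuration. -/
lemma configC {k : ℕ} (hk1 : 1 ≤ k) (hk2 : k + 5 ≤ n)
    (h1 : G.Adj w (p k)) (h2 : G.Adj w (p (k + 4))) : False := by
  have inj := hp.1
  have adj := hp.2
  refine S113_of hfree (p k) (p (k-1)) (p (k+1)) w (p (k+4)) (p (k+5))
    ?_ ?_ ?_ ?_ ?_ ?_ ?_ ?_ ?_ ?_ ?_ ?_ ?_ ?_ ?_ ?_ ?_ ?_ ?_ ?_ ?_ ?_ ?_ ?_ ?_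
  · exact (adj k (by omega) (k-1) (by omega)).mpr (by omega)
  · exact (adj k (by omega) (k+1) (by omega)).mpr (by omega)
  · exact h1.symm
  · exact h2
  · exact (adj (k+4) (by omega) (k+5) (by omega)).mpr (by omega)
  · rw [adj (k-1) (by omega) (k+1) (by omega)]; omega
  · exact fun h => vside hbip hp (by omega : k ≤ n) (by omega : k - 1 ≤ n) h1 (by omega) h.symm
  · rw [adj (k-1) (by omega) (k+4) (by omega)]; omega
  · rw [adj (k-1) (by omega) (k+5) (by omega)]; omega
  · exact fun h => vside hbip hp (by omega : k ≤ n) (by omega : k + 1 ≤ n) h1 (by omega) h.symm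
  · rw [adj (k+1) (by omega) (k+4) (by omega)]; omega
  · rw [adj (k+1) (by omega) (k+5) (by omega)]; omega
  · rw [adj k (by omega) (k+4) (by omega)]; omega
  · rw [adj k (by omega) (k+5) (by omega)]; omega
  · exact vside hbip hp (by omega : k ≤ n) (by omega : k + 5 ≤ n) h1 (by omega)
  · exact fun h => (by omega : ¬ (k-1 = k+1)) (inj (k-1) (by omega) (k+1) (by omega) h)
  · exact fun h => hw (k-1) (by omega) h.symm
  · exact fun h => (by omega : ¬ (k-1 = k+4)) (inj (k-1) (by omega) (k+4) (by omega) h)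
  · exact fun h => (by omega : ¬ (k-1 = k+5)) (inj (k-1) (by omega) (k+5) (by omega) h)
  · exact fun h => hw (k+1) (by omega) h.symm
  · exact fun h => (by omega : ¬ (k+1 = k+4)) (inj (k+1) (by omega) (k+4) (by omega) h)
  · exact fun h => (by omega : ¬ (k+1 = k+5)) (inj (k+1) (by omega) (k+5) (by omega) h)
  · exact fun h => (by omega : ¬ (k = k+4)) (inj k (by omega) (k+4) (by omega) h)
  · exact fun h => (by omega : ¬ (k = k+5)) (inj k (by omega) (k+5) (by omega) h)
  · exact hw (k+5) (by omega)

/-- Main Lemma 1: an outside vertex is not adjacent to any interior path vertex. -/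
lemma ML1 (hn : 7 ≤ n) {i : ℕ} (hi1 : 1 ≤ i) (hi2 : i + 1 ≤ n)
    (hadj : G.Adj w (p i)) : False := by
  have hq : IsIndPath G (fun t => p (n - t)) n := indPath_rev hp
  have hwq : ∀ t ≤ n, w ≠ (fun t => p (n - t)) t := fun t ht => hw (n - t) (by omega)
  set t0 := (i - 1) / 2 with ht0
  -- go down to index k = i - 2*t0 ∈ {1,2}
  have hq0 : G.Adj w ((fun t => p (n - t)) (n - i)) := by
    show G.Adj w (p (n - (n - i)))
    have e : n - (n - i) = i := by omega
    rw [e]; exact hadj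
  have hdownq := cascUp hbip hfree hq hwq (i := n - i) (by omega) hq0 t0 (by omega)
  have hdown : G.Adj w (p (i - 2 * t0)) := by
    have e : n - (n - i + 2 * t0) = i - 2 * t0 := by omega
    rw [← e]
    exact hdownq
  set k := i - 2 * t0 with hk
  have hk1 : 1 ≤ k := by omega
  have hk2 : k ≤ 2 := by omega
  have h4 : G.Adj w (p (k + 4)) := by
    have := cascUp hbip hfree hp hw (i := k) hk1 hdown 2 (by omega)
    have e : k + 2 * 2 = k + 4 := by ring
    rwa [e] at this
  exact configC hbip hfree hp hw hk1 (by omega) hdown h4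

end Core

section Ext

variable {V : Type} {G : SimpleGraph V} {W B : Set V}

lemma extendPath {p : ℕ → V} {n : ℕ} (hp : IsIndPath G p n) {w : V}
    (hw : ∀ t ≤ n, w ≠ p t) (h0 : G.Adj w (p 0))
    (hno : ∀ t, 1 ≤ t → t ≤ n → ¬ G.Adj w (p t)) :
    IsIndPath G (fun t => if t = 0 then w else p (t - 1)) (n + 1) := by
  constructor
  · intro i hi j hj h
    simp only at h
    by_cases hi0 : i = 0 <;> by_cases hj0 : j = 0
    · omega
    · rw [if_pos hi0, if_neg hj0] at h
      exact absurd h (hw (j-1) (by omega))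
    · rw [if_neg hi0, if_pos hj0] at h
      exact absurd h.symm (hw (i-1) (by omega))
    · rw [if_neg hi0, if_neg hj0] at h
      have := hp.1 (i-1) (by omega) (j-1) (by omega) h
      omega
  · intro i hi j hj
    simp only
    by_cases hi0 : i = 0 <;> by_cases hj0 : j = 0
    · rw [if_pos hi0, if_pos hj0]
      exact iff_of_false (G.loopless.irrefl w) (by omega)
    · rw [if_pos hi0, if_neg hj0]
      by_cases hj1 : j = 1
      · subst hj1
        exact iff_of_true h0 (by omega)
      · refine iff_of_false (hno (j-1) (by omega) (by omega)) (by omega)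
    · rw [if_neg hi0, if_pos hj0]
      by_cases hi1 : i = 1
      · subst hi1
        exact iff_of_true h0.symm (by omega)
      · exact iff_of_false (fun h => hno (i-1) (by omega) (by omega) h.symm) (by omega)
    · rw [if_neg hi0, if_neg hj0]
      rw [hp.2 (i-1) (by omega) (j-1) (by omega)]
      omega

variable (hbip : IsBipartition G W B) (hfree : IsEmpty (S113 ↪g G))

include hbip hfree in
/-- if `w` is an outside vertex adjacent to `p 0`, and the path is a longest induced path,
then `w` is also adjacent to `p n` -/
lemma ends {p : ℕ → V} {n : ℕ} (hp : IsIndPath G p n) (hn : 7 ≤ n) {w : V}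
    (hw : ∀ t ≤ n, w ≠ p t) (h0 : G.Adj w (p 0))
    (hnomax : ∀ q : ℕ → V, ¬ IsIndPath G q (n + 1)) : G.Adj w (p n) := by
  by_contra hnadj
  refine hnomax _ (extendPath hp hw h0 ?_)
  intro t h1t htn hadj
  by_cases htn' : t = n
  · subst htn'; exact hnadj hadj
  · exact ML1 hbip hfree hp hw hn (by omega) (by omega) hadj

end Ext

section Cyc

variable {V : Type} {G : SimpleGraph V} {W B : Set V}

lemma modcancel {m : ℕ} (hm : 0 < m) (k : ℕ) {i j : ℕ} (hi : i < m) (hj : j < m) :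
    ((i + k) % m = (j + k) % m) ↔ i = j := by
  constructor
  · intro h
    have h2 : i % m = j % m := Nat.ModEq.add_right_cancel' k h
    rwa [Nat.mod_eq_of_lt hi, Nat.mod_eq_of_lt hj] at h2
  · intro h; rw [h]

lemma modshift {m : ℕ} (hm : 2 ≤ m) (x : ℕ) : (x % m + 1) % m = (x + 1) % m := by
  conv_rhs => rw [Nat.add_mod]
  rw [Nat.mod_eq_of_lt (show 1 < m by omega)]

lemma modsolve {m : ℕ} (hm3 : 3 ≤ m) {j : ℕ} (hj : j < m) :
    (3 + ((j + m - 3) % m)) % m = j := by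
  have h1 : (3 + (j + m - 3) % m) % m = (3 + (j + m - 3)) % m :=
    Nat.ModEq.add_left 3 (Nat.mod_modEq _ _)
  have e : 3 + (j + m - 3) = j + m := by omega
  rw [h1, e, Nat.add_mod_right, Nat.mod_eq_of_lt hj]

/-- the cyclic extension of the path `p` by the vertex `w` -/
def cyc (p : ℕ → V) (n : ℕ) (w : V) : ℕ → V := fun t => if t ≤ n then p t else w

variable (hbip : IsBipartition G W B) (hfree : IsEmpty (S113 ↪g G))
variable {p : ℕ → V} {n : ℕ} (hp : IsIndPath G p n) (hn : 7 ≤ n)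
variable {w : V} (hw : ∀ t ≤ n, w ≠ p t)

lemma cycInj (hp₁ : IsIndPath G p n) (hw₁ : ∀ t ≤ n, w ≠ p t)
    (a : ℕ) (ha : a ≤ n + 1) (b : ℕ) (hb : b ≤ n + 1)
    (h : cyc p n w a = cyc p n w b) : a = b := by
  unfold cyc at h
  by_cases ha' : a ≤ n <;> by_cases hb' : b ≤ n
  · rw [if_pos ha', if_pos hb'] at h
    exact hp₁.1 a ha' b hb' h
  · rw [if_pos ha', if_neg hb'] at h
    exact absurd h.symm (hw₁ a ha')
  · rw [if_neg ha', if_pos hb'] at h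
    exact absurd h (hw₁ b hb')
  · omega

include hbip hfree hp hn hw

lemma adjPW (hb0 : G.Adj w (p 0)) (hbn : G.Adj w (p n)) (a : ℕ) (ha : a ≤ n) :
    G.Adj (p a) w ↔ (a = 0 ∨ a = n) := by
  constructor
  · intro h
    by_contra hcon
    push_neg at hcon
    exact ML1 hbip hfree hp hw hn (i := a) (by omega) (by omega) h.symm
  · rintro (rfl | rfl)
    · exact hb0.symm
    · exact hbn.symm

lemma cycAdj (hb0 : G.Adj w (p 0)) (hbn : G.Adj w (p n)) (a : ℕ) (ha : a ≤ n + 1)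
    (b : ℕ) (hb : b ≤ n + 1) :
    G.Adj (cyc p n w a) (cyc p n w b) ↔
      ((a + 1) % (n + 2) = b ∨ (b + 1) % (n + 2) = a) := by
  have hself : (n + 2) % (n + 2) = 0 := Nat.mod_self _
  unfold cyc
  by_cases ha' : a ≤ n <;> by_cases hb' : b ≤ n
  · rw [if_pos ha', if_pos hb', hp.2 a ha' b hb',
      Nat.mod_eq_of_lt (show a + 1 < n + 2 by omega),
      Nat.mod_eq_of_lt (show b + 1 < n + 2 by omega)]
  · have hb1 : b = n + 1 := by omega
    subst hb1
    rw [if_pos ha', if_neg (by omega), adjPW hbip hfree hp hn hw hb0 hbn a ha',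
      Nat.mod_eq_of_lt (show a + 1 < n + 2 by omega),
      show n + 1 + 1 = n + 2 from rfl, hself]
    omega
  · have ha1 : a = n + 1 := by omega
    subst ha1
    rw [if_neg (by omega), if_pos hb', G.adj_comm,
      adjPW hbip hfree hp hn hw hb0 hbn b hb',
      Nat.mod_eq_of_lt (show b + 1 < n + 2 by omega),
      show n + 1 + 1 = n + 2 from rfl, hself]
    omega
  · have ha1 : a = n + 1 := by omega
    have hb1 : b = n + 1 := by omega
    subst ha1; subst hb1
    rw [if_neg (show ¬ (n + 1 ≤ n) by omega)]
    refine iff_of_false (G.loopless.irrefl w) ?_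
    rw [show n + 1 + 1 = n + 2 from rfl, hself]
    omega

lemma cycRot (hb0 : G.Adj w (p 0)) (hbn : G.Adj w (p n)) (k : ℕ) :
    IsIndPath G (fun t => cyc p n w ((t + k) % (n + 2))) n := by
  have hm : 0 < n + 2 := by omega
  constructor
  · intro i hi j hj h
    have h2 := cycInj hp hw ((i + k) % (n + 2))
      (by have := Nat.mod_lt (i + k) hm; omega) ((j + k) % (n + 2))
      (by have := Nat.mod_lt (j + k) hm; omega) h
    exact (modcancel hm k (show i < n + 2 by omega) (show j < n + 2 by omega)).mp h2
  · intro i hi j hj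
    rw [cycAdj hbip hfree hp hn hw hb0 hbn ((i + k) % (n + 2))
        (by have := Nat.mod_lt (i + k) hm; omega) ((j + k) % (n + 2))
        (by have := Nat.mod_lt (j + k) hm; omega),
      modshift (by omega), modshift (by omega),
      show i + k + 1 = (i + 1) + k by ring, show j + k + 1 = (j + 1) + k by ring,
      modcancel hm k (show i + 1 < n + 2 by omega) (show j < n + 2 by omega),
      modcancel hm k (show j + 1 < n + 2 by omega) (show i < n + 2 by omega)]

end Cyc

lemma finSub {n : ℕ} (x y : Fin (n + 2)) : ((x.val + 1) % (n + 2) = y.val) ↔ y - x = 1 := by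
  rw [sub_eq_iff_eq_add, Fin.ext_iff, Fin.val_add, Fin.val_one, Nat.add_comm 1 x.val, eq_comm]

end St9Aux


theorem statement9 {V : Type} [Fintype V] (G : SimpleGraph V) (W B : Set V)
    (hbip : IsBipartition G W B) (hconn : G.Connected)
    (hfree : IsEmpty (S113 ↪g G)) (hP8 : Nonempty (pathGraph 8 ↪g G)) :
    (∃ n, Nonempty (G ≃g pathGraph n)) ∨
    (∃ n, 3 ≤ n ∧ Nonempty (G ≃g cycleGraph n)) := by
  classical
  obtain ⟨f8⟩ := hP8
  have hP7 : ∃ p : ℕ → V, IsIndPath G p 7 := by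
    refine ⟨fun i => f8 ⟨min i 7, by omega⟩, ?_, ?_⟩
    · intro i hi j hj h
      have h2 : (⟨min i 7, by omega⟩ : Fin 8) = ⟨min j 7, by omega⟩ := f8.injective h
      simp only [Fin.mk.injEq] at h2
      omega
    · intro i hi j hj
      rw [f8.map_rel_iff, pathGraph_adj]
      simp only
      omega
  set PP : ℕ → Prop := fun m => ∃ p : ℕ → V, IsIndPath G p m with hPP
  have hbd : ∀ m, PP m → m < Fintype.card V := by
    rintro m ⟨p, hp⟩
    have hinj : Function.Injective (fun i : Fin (m + 1) => p i.val) := by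
      intro i j h
      exact Fin.ext (hp.1 i.val (by omega) j.val (by omega) h)
    have := Fintype.card_le_of_injective _ hinj
    simpa using this
  set n := Nat.findGreatest PP (Fintype.card V) with hndef
  have h7card : 7 ≤ Fintype.card V := by have := hbd 7 hP7; omega
  have hPn : PP n := Nat.findGreatest_spec h7card hP7
  have hn7 : 7 ≤ n := Nat.le_findGreatest h7card hP7
  have hmax : ∀ q : ℕ → V, ¬ IsIndPath G q (n + 1) := by
    intro q hq
    have hmem : PP (n + 1) := ⟨q, hq⟩
    exact Nat.findGreatest_is_greatest (k := n + 1) (n := Fintype.card V)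
      (by rw [← hndef]; omega) (by have := hbd (n + 1) hmem; omega) hmem
  obtain ⟨p, hp⟩ := hPn
  by_cases hall : ∀ v : V, ∃ i, i ≤ n ∧ v = p i
  · left
    refine ⟨n + 1, ⟨?_⟩⟩
    have hbij : Function.Bijective (fun i : Fin (n + 1) => p i.val) := by
      constructor
      · intro i j h
        exact Fin.ext (hp.1 i.val (by omega) j.val (by omega) h)
      · intro x
        obtain ⟨i, hi, hx⟩ := hall x
        exact ⟨⟨i, by omega⟩, hx.symm⟩
    refine RelIso.symm ⟨Equiv.ofBijective _ hbij, fun {a b} => ?_⟩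
    show G.Adj (p a.val) (p b.val) ↔ (pathGraph (n + 1)).Adj a b
    rw [hp.2 a.val (by omega) b.val (by omega), pathGraph_adj]
  · push_neg at hall
    obtain ⟨v₀, hv₀⟩ := hall
    set S : Set V := {x | ∀ i ≤ n, x ≠ p i} with hS
    have hv₀S : v₀ ∈ S := fun i hi => hv₀ i hi
    have hp0S : p 0 ∉ S := fun h => h 0 (by omega) rfl
    obtain ⟨wk⟩ := hconn.preconnected v₀ (p 0)
    obtain ⟨d, _, hd1, hd2⟩ := wk.exists_boundary_dart S hv₀S hp0S
    have hd2' : ∃ i, i ≤ n ∧ d.snd = p i := by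
      by_contra hcon
      push_neg at hcon
      exact hd2 (fun i hi => hcon i hi)
    obtain ⟨i, hi, hsnd⟩ := hd2'
    have hwout : ∀ t ≤ n, d.fst ≠ p t := hd1
    have hadj : G.Adj d.fst (p i) := hsnd ▸ d.adj
    have hio : i = 0 ∨ i = n := by
      by_contra hcon
      push_neg at hcon
      exact St9Aux.ML1 hbip hfree hp hwout hn7 (by omega) (by omega) hadj
    have hboth : G.Adj d.fst (p 0) ∧ G.Adj d.fst (p n) := by
      rcases hio with rfl | rfl
      · exact ⟨hadj, St9Aux.ends hbip hfree hp hn7 hwout hadj hmax⟩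
      · have hq := St9Aux.indPath_rev hp
        have hwq : ∀ t ≤ n, d.fst ≠ (fun t => p (n - t)) t :=
          fun t ht => hwout (n - t) (by omega)
        have h0q : G.Adj d.fst ((fun t => p (n - t)) 0) := by
          show G.Adj d.fst (p (n - 0))
          rw [Nat.sub_zero]
          exact hadj
        have hnq := St9Aux.ends hbip hfree hq hn7 hwq h0q hmax
        have h00 : G.Adj d.fst (p (n - n)) := hnq
        rw [Nat.sub_self] at h00
        exact ⟨h00, hadj⟩
    right
    have hcov : ∀ x : V, ∃ j, j ≤ n + 1 ∧ x = St9Aux.cyc p n d.fst j := by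
      by_contra hcon
      push_neg at hcon
      obtain ⟨x, hx⟩ := hcon
      set S2 : Set V := {y | ∀ j ≤ n + 1, y ≠ St9Aux.cyc p n d.fst j} with hS2
      have hxS2 : x ∈ S2 := fun j hj => hx j hj
      have hp0S2 : p 0 ∉ S2 := fun h => h 0 (by omega) (by simp [St9Aux.cyc])
      obtain ⟨wk2⟩ := hconn.preconnected x (p 0)
      obtain ⟨d2, _, hd21, hd22⟩ := wk2.exists_boundary_dart S2 hxS2 hp0S2
      have hj' : ∃ j, j ≤ n + 1 ∧ d2.snd = St9Aux.cyc p n d.fst j := by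
        by_contra hcon2
        push_neg at hcon2
        exact hd22 (fun j hj => hcon2 j hj)
      obtain ⟨j, hj, hsnd2⟩ := hj'
      have hadj2 : G.Adj d2.fst (St9Aux.cyc p n d.fst j) := hsnd2 ▸ d2.adj
      set k := (j + (n + 2) - 3) % (n + 2) with hk
      have hrot := St9Aux.cycRot hbip hfree hp hn7 hwout hboth.1 hboth.2 k
      have hurot : ∀ t ≤ n, d2.fst ≠ (fun t => St9Aux.cyc p n d.fst ((t + k) % (n + 2))) t := by
        intro t ht
        exact hd21 ((t + k) % (n + 2))
          (by have := Nat.mod_lt (t + k) (show 0 < n + 2 by omega); omega)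
      have hadjrot : G.Adj d2.fst ((fun t => St9Aux.cyc p n d.fst ((t + k) % (n + 2))) 3) := by
        show G.Adj d2.fst (St9Aux.cyc p n d.fst ((3 + k) % (n + 2)))
        have e : (3 + k) % (n + 2) = j := St9Aux.modsolve (by omega) (by omega)
        rw [e]
        exact hadj2
      exact St9Aux.ML1 hbip hfree hrot hurot hn7 (i := 3) (by omega) (by omega) hadjrot
    refine ⟨n + 2, by omega, ⟨?_⟩⟩
    have hbij : Function.Bijective (fun i : Fin (n + 2) => St9Aux.cyc p n d.fst i.val) := by
      constructor
      · intro a b h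
        exact Fin.ext (St9Aux.cycInj hp hwout a.val (by omega) b.val (by omega) h)
      · intro x
        obtain ⟨j, hj, hx⟩ := hcov x
        exact ⟨⟨j, by omega⟩, hx.symm⟩
    refine RelIso.symm ⟨Equiv.ofBijective _ hbij, fun {a b} => ?_⟩
    show G.Adj (St9Aux.cyc p n d.fst a.val) (St9Aux.cyc p n d.fst b.val) ↔ (cycleGraph (n + 2)).Adj a b
    rw [St9Aux.cycAdj hbip hfree hp hn7 hwout hboth.1 hboth.2 a.val (by omega) b.val (by omega),
      cycleGraph_adj, St9Aux.finSub a b, St9Aux.finSub b a]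
    exact or_comm
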